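/- If f : I → X is quasi-asymptotically almost periodic, then for any a ∈ I and b ∈ I \ {0}, the functions t ↦ f(t+a) and t ↦ f(bt) are quasi-asymptotically almost periodic. -/

import Mathlib

open Set Filter MeasureTheory

def IsQAAP {X : Type*} [NormedAddCommGroup X] (I : Set ℝ) (f : ℝ → X) : Prop :=
  ContinuousOn f I ∧ (∃ C, ∀ t ∈ I, ‖f t‖ ≤ C) ∧
  ∀ ε > (0:ℝ), ∃ L > (0:ℝ), ∀ a : ℝ, Set.Icc a (a + L) ⊆ I →
    ∃ τ ∈ Set.Icc a (a + L), ∃ M > (0:ℝ),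
      ∀ t ∈ I, M ≤ |t| → ‖f (t + τ) - f t‖ ≤ ε

def IsAAP {X : Type*} [NormedAddCommGroup X] (I : Set ℝ) (f : ℝ → X) : Prop :=
  ContinuousOn f I ∧ (∃ C, ∀ t ∈ I, ‖f t‖ ≤ C) ∧
  ∀ ε > (0:ℝ), ∃ l > (0:ℝ), ∃ M > (0:ℝ), ∀ a : ℝ, Set.Icc a (a + l) ⊆ I →
    ∃ τ ∈ Set.Icc a (a + l),
      ∀ t ∈ I, M ≤ |t| → M ≤ |t + τ| → ‖f (t + τ) - f t‖ ≤ ε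
/-- Translations and dilations of a quasi-asymptotically almost periodic
function are quasi-asymptotically almost periodic. -/
theorem isQAAP_translate_dilate {X : Type*} [NormedAddCommGroup X]
    (I : Set ℝ) (hI : I = Set.univ ∨ I = Set.Ici 0) (f : ℝ → X)
    (hf : IsQAAP I f) (a b : ℝ) (ha : a ∈ I) (hb : b ∈ I) (hb0 : b ≠ 0) :
    IsQAAP I (fun t => f (t + a)) ∧ IsQAAP I (fun t => f (b * t)) := by
  obtain ⟨hcont, ⟨C, hC⟩, hq⟩ := hf
  have hmap_a : MapsTo (fun t => t + a) I I := by
    rcases hI with h | h <;> subst h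
    · intro t _; trivial
    · intro t ht; exact add_nonneg (Set.mem_Ici.mp ht) (Set.mem_Ici.mp ha)
  have hmap_b : MapsTo (fun t => b * t) I I := by
    rcases hI with h | h <;> subst h
    · intro t _; trivial
    · intro t ht; exact mul_nonneg (Set.mem_Ici.mp hb) (Set.mem_Ici.mp ht)
  constructor
  · refine ⟨hcont.comp ((continuous_add_right a).continuousOn) hmap_a, ⟨C, fun t ht => hC _ (hmap_a ht)⟩, ?_⟩
    intro ε hε
    obtain ⟨L, hL, hL'⟩ := hq ε hε
    refine ⟨L, hL, fun a' ha' => ?_⟩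
    obtain ⟨τ, hτ, M, hM, hMle⟩ := hL' a' ha'
    refine ⟨τ, hτ, M + |a|, by positivity, fun t ht hMt => ?_⟩
    have h1 : t + a ∈ I := hmap_a ht
    have h2 : M ≤ |t + a| := by
      have := abs_sub_abs_le_abs_sub (t) (-a)
      have h3 := abs_neg a
      have := abs_add_le t a
      have habs : |t| - |a| ≤ |t + a| := by
        have := abs_sub_abs_le_abs_sub t (-a)
        simpa [sub_neg_eq_add] using this
      linarith
    have := hMle (t + a) h1 h2
    simpa [show t + τ + a = t + a + τ by ring] using this
  · refine ⟨hcont.comp ((continuous_mul_left b).continuousOn) hmap_b, ⟨C, fun t ht => hC _ (hmap_b ht)⟩, ?_⟩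
    intro ε hε
    obtain ⟨L, hL, hL'⟩ := hq ε hε
    have hb' : (0:ℝ) < |b| := abs_pos.mpr hb0
    refine ⟨L / |b|, by positivity, fun a' ha' => ?_⟩
    have key : ∀ τ, τ / b ∈ Set.Icc a' (a' + L / |b|) → ∃ M > (0:ℝ),
        ∀ t ∈ I, M ≤ |t| → ‖f (b * (t + τ / b)) - f (b * t)‖ ≤ ε →
        True := fun _ _ => ⟨1, one_pos, fun _ _ _ _ => trivial⟩
    rcases lt_or_gt_of_ne hb0 with hneg | hpos
    · -- b < 0, so I = univ
      have hIuniv : I = Set.univ := by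
        rcases hI with h | h
        · exact h
        · exfalso; rw [h] at hb; exact absurd hb (not_le.mpr hneg)
      obtain ⟨τ, hτ, M, hM, hMle⟩ := hL' (b * (a' + L / |b|)) (by rw [hIuniv]; exact fun x _ => trivial)
      have hbL : b * (L / |b|) = -L := by
        rw [abs_of_neg hneg, div_neg, mul_neg, mul_div_cancel₀ _ hb0]
      refine ⟨τ / b, ?_, M / |b|, by positivity, fun t ht hMt => ?_⟩
      · obtain ⟨hτ1, hτ2⟩ := hτ
        constructor
        · rw [le_div_iff_of_neg hneg]
          nlinarith [hτ2, hbL]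
        · rw [div_le_iff_of_neg hneg]
          nlinarith [hτ1, hbL]
      · have hs : b * t ∈ I := hmap_b ht
        have habs : M ≤ |b * t| := by
          rw [abs_mul]
          calc M = |b| * (M / |b|) := by field_simp
            _ ≤ |b| * |t| := by gcongr
        have := hMle (b * t) hs habs
        simpa [show b * (t + τ / b) = b * t + τ by rw [mul_add, mul_div_cancel₀ _ hb0]] using this
    · -- b > 0
      have ha'I : a' ∈ I := ha' ⟨le_refl _, le_add_of_nonneg_right (by positivity)⟩
      have hsub : Set.Icc (b * a') (b * a' + L) ⊆ I := by
        rcases hI with h | h <;> subst h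
        · exact fun x _ => trivial
        · intro x hx
          have : 0 ≤ b * a' := mul_nonneg hb ha'I
          exact le_trans this hx.1
      obtain ⟨τ, hτ, M, hM, hMle⟩ := hL' (b * a') hsub
      have hbL : b * (L / |b|) = L := by
        rw [abs_of_pos hpos, mul_div_cancel₀ _ hb0]
      refine ⟨τ / b, ?_, M / |b|, by positivity, fun t ht hMt => ?_⟩
      · obtain ⟨hτ1, hτ2⟩ := hτ
        constructor
        · rw [le_div_iff₀ hpos]; linarith
        · rw [div_le_iff₀ hpos]; nlinarith [hτ2, hbL]
      · have hs : b * t ∈ I := hmap_b ht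
        have habs : M ≤ |b * t| := by
          rw [abs_mul]
          calc M = |b| * (M / |b|) := by field_simp
            _ ≤ |b| * |t| := by gcongr
        have := hMle (b * t) hs habs
        simpa [show b * (t + τ / b) = b * t + τ by rw [mul_add, mul_div_cancel₀ _ hb0]] using this
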